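/- For all x > 0, 4·φ(x)·(x/√(2π) + 1/2) < 1, where φ(x) = e^{-x²/2}/√(2π) is the standard normal density. -/

import Mathlib

noncomputable def stdphi (x : ℝ) : ℝ := Real.exp (-x ^ 2 / 2) / Real.sqrt (2 * Real.pi)

theorem stmt10 (x : ℝ) (hx : 0 < x) :
    4 * stdphi x * (x / Real.sqrt (2 * Real.pi) + 1 / 2) < 1 := by
  have hπl := Real.pi_gt_d6
  have hπu := Real.pi_lt_d6
  set s := Real.sqrt (2 * Real.pi) with hs
  have hs0 : 0 < s := Real.sqrt_pos.mpr (by positivity)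
  have hs2 : s ^ 2 = 2 * Real.pi := Real.sq_sqrt (by positivity)
  have hsl : 2.506 < s := by nlinarith [hs0, hs2]
  have hsu : s < 2.5067 := by nlinarith [hs0, hs2]
  have hE1 : 1 + x ^ 2 / 4 ≤ Real.exp (x ^ 2 / 4) := by
    have := Real.add_one_le_exp (x ^ 2 / 4); linarith
  have hE : (1 + x ^ 2 / 4) ^ 2 ≤ Real.exp (x ^ 2 / 2) := by
    have h := pow_le_pow_left₀ (by positivity) hE1 2
    rw [← Real.exp_nat_mul] at h
    calc (1 + x ^ 2 / 4) ^ 2 ≤ Real.exp ((2 : ℕ) * (x ^ 2 / 4)) := h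
      _ = Real.exp (x ^ 2 / 2) := by push_cast; ring_nf
  have hE0 : 0 < Real.exp (x ^ 2 / 2) := Real.exp_pos _
  have key : 4 * (x / s + 1 / 2) < Real.exp (x ^ 2 / 2) * s := by
    rw [div_add' _ _ _ hs0.ne', ← mul_div_assoc, div_lt_iff₀ hs0]
    nlinarith [hE, hs2, sq_nonneg (x - 0.6), sq_nonneg x, mul_pos hE0 hs0,
      sq_nonneg (x ^ 2 - 0.36), mul_pos hs0 hs0]
  unfold stdphi
  rw [show -x ^ 2 / 2 = -(x ^ 2 / 2) by ring, Real.exp_neg, ← hs]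
  have h1 : 4 * ((Real.exp (x ^ 2 / 2))⁻¹ / s) * (x / s + 1 / 2)
      = (4 * (x / s + 1 / 2)) / (Real.exp (x ^ 2 / 2) * s) := by
    field_simp
  rw [h1, div_lt_one (by positivity)]
  exact key
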